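/- Let z₀ ∈ ℂ, N₀ ∈ ℕ with N₀ > 1, ε₀ ∈ (0,1), and reals 1 < μ₀ < M₀. If a and A both lie in {z ∈ ℂ : |z^{N₀}·z₀ − 1| < ε₀} ∩ [μ₀, M₀] with a < A, then A − a < M₀·(((1+ε₀)/(1−ε₀))^{1/N₀} − 1). -/

import Mathlib

theorem stmt_1 (z₀ : ℂ) (N₀ : ℕ) (hN₀ : 1 < N₀) (ε₀ : ℝ) (hε₀ : ε₀ ∈ Set.Ioo (0:ℝ) 1)
    (μ₀ M₀ : ℝ) (hμ₀ : 1 < μ₀) (hM₀ : μ₀ < M₀) (a A : ℝ)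
    (ha : a ∈ Set.Icc μ₀ M₀) (hA : A ∈ Set.Icc μ₀ M₀)
    (ha' : ‖(a:ℂ) ^ N₀ * z₀ - 1‖ < ε₀)
    (hA' : ‖(A:ℂ) ^ N₀ * z₀ - 1‖ < ε₀)
    (haA : a < A) :
    A - a < M₀ * (((1 + ε₀) / (1 - ε₀)) ^ ((1:ℝ) / N₀) - 1) := by
  obtain ⟨hε0, hε1⟩ := hε₀
  obtain ⟨ha1, ha2⟩ := ha
  obtain ⟨hA1, hA2⟩ := hA
  have hapos : 0 < a := lt_of_lt_of_le (lt_trans one_pos hμ₀) ha1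
  have hApos : 0 < A := lt_trans hapos haA
  set r := ‖z₀‖ with hr
  have habs : ‖(a:ℂ) ^ N₀ * z₀‖ = a ^ N₀ * r := by
    rw [norm_mul, norm_pow, Complex.norm_real, Real.norm_eq_abs, abs_of_pos hapos]
  have hAabs : ‖(A:ℂ) ^ N₀ * z₀‖ = A ^ N₀ * r := by
    rw [norm_mul, norm_pow, Complex.norm_real, Real.norm_eq_abs, abs_of_pos hApos]
  have key : ∀ w : ℂ, ‖w - 1‖ < ε₀ →
      1 - ε₀ < ‖w‖ ∧ ‖w‖ < 1 + ε₀ := by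
    intro w hw
    have h := abs_norm_sub_norm_le w 1
    rw [norm_one] at h
    constructor
    · have := abs_lt.mp (lt_of_le_of_lt h hw)
      linarith [this.1]
    · have := abs_lt.mp (lt_of_le_of_lt h hw)
      linarith [this.2]
  have h1 := key _ ha'
  have h2 := key _ hA'
  rw [habs] at h1
  rw [hAabs] at h2
  have hlo : 1 - ε₀ < a ^ N₀ * r := h1.1
  have hhi : A ^ N₀ * r < 1 + ε₀ := h2.2
  have hεpos : (0:ℝ) < 1 - ε₀ := by linarith
  have hrpos : 0 < r := by
    by_contra h
    push_neg at h
    nlinarith [pow_pos hapos N₀]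
  have hratio : (A / a) ^ N₀ < (1 + ε₀) / (1 - ε₀) := by
    rw [div_pow, div_lt_div_iff₀ (pow_pos hapos N₀) hεpos]
    nlinarith [pow_pos hapos N₀, pow_pos hApos N₀]
  have hN0 : N₀ ≠ 0 := by omega
  have hdiv : A / a = ((A / a) ^ N₀) ^ ((1:ℝ) / N₀) := by
    rw [one_div, Real.pow_rpow_inv_natCast (by positivity) hN0]
  have hmono : ((A / a) ^ N₀ : ℝ) ^ ((1:ℝ) / N₀) <
      ((1 + ε₀) / (1 - ε₀)) ^ ((1:ℝ) / N₀) :=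
    Real.rpow_lt_rpow (by positivity) hratio (by positivity)
  have hAa : A / a < ((1 + ε₀) / (1 - ε₀)) ^ ((1:ℝ) / N₀) := hdiv ▸ hmono
  set t := ((1 + ε₀) / (1 - ε₀)) ^ ((1:ℝ) / N₀) with ht
  have hq1 : 1 < (1 + ε₀) / (1 - ε₀) := by
    rw [lt_div_iff₀ hεpos]; linarith
  have ht1 : 1 < t :=
    (Real.one_lt_rpow_iff_of_pos (by positivity)).mpr (Or.inl ⟨hq1, by positivity⟩)
  have hAlt : A < a * t := by
    rw [div_lt_iff₀ hapos] at hAa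
    linarith [hAa]
  calc A - a < a * t - a := by linarith
    _ = a * (t - 1) := by ring
    _ ≤ M₀ * (t - 1) := by
        apply mul_le_mul_of_nonneg_right ha2 (by linarith)
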